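/- arXiv:2212.02323 — 2 statements merged into one kernel-verified Lean document; each statement's English description precedes it below -/
import Mathlib

section
/- Let M, N be m×m real symmetric positive semidefinite matrices. Then the spectral norm of their Hadamard product satisfies ‖M∘N‖ ≤ (max_{j∈[m]} M_{jj}) · ‖N‖. -/
open scoped BigOperators
open scoped Matrix

/-- The Euclidean norm of a finitely supported real vector. -/
noncomputable def eNorm {β : Type*} [Fintype β] (v : β → ℝ) : ℝ :=
  Real.sqrt (∑ i, v i ^ 2)

/-- The spectral norm of a real matrix: `‖M‖ = max_{ξ ∈ S^{m-1}} ‖Mξ‖`. -/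
noncomputable def specNorm {α β : Type*} [Fintype α] [Fintype β]
    (M : Matrix α β ℝ) : ℝ :=
  ⨆ ξ : {v : β → ℝ // eNorm v = 1}, eNorm (M.mulVec ξ.1)

section helpers
variable {α β : Type*} [Fintype α] [Fintype β]

lemma eNorm_nonneg (v : β → ℝ) : 0 ≤ eNorm v := Real.sqrt_nonneg _

lemma eNorm_sq (v : β → ℝ) : eNorm v ^ 2 = ∑ i, v i ^ 2 :=
  Real.sq_sqrt (Finset.sum_nonneg fun i _ => sq_nonneg _)

lemma eNorm_smul (c : ℝ) (v : β → ℝ) : eNorm (c • v) = |c| * eNorm v := by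
  unfold eNorm
  simp only [Pi.smul_apply, smul_eq_mul, mul_pow]
  rw [← Finset.mul_sum, Real.sqrt_mul (sq_nonneg c), Real.sqrt_sq_eq_abs]

lemma eNorm_eq_zero {v : β → ℝ} (h : eNorm v = 0) : v = 0 := by
  have h2 : ∑ i, v i ^ 2 = 0 := by
    have := eNorm_sq v
    rw [h] at this; simpa using this.symm
  funext i
  have := (Finset.sum_eq_zero_iff_of_nonneg (fun i _ => sq_nonneg (v i))).1 h2 i (Finset.mem_univ i)
  exact pow_eq_zero_iff (by norm_num) |>.1 this

/-- Cauchy-Schwarz for dot products. -/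
lemma dotProduct_le (v w : β → ℝ) : v ⬝ᵥ w ≤ eNorm v * eNorm w := by
  have h := Finset.sum_mul_sq_le_sq_mul_sq Finset.univ v w
  have : |v ⬝ᵥ w| ≤ eNorm v * eNorm w := by
    rw [← Real.sqrt_sq_eq_abs]
    calc Real.sqrt ((v ⬝ᵥ w) ^ 2) ≤ Real.sqrt ((∑ i, v i ^ 2) * ∑ i, w i ^ 2) :=
          Real.sqrt_le_sqrt h
      _ = eNorm v * eNorm w := by
          rw [Real.sqrt_mul (Finset.sum_nonneg fun i _ => sq_nonneg _)]; rfl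
  exact (le_abs_self _).trans this

/-- Frobenius-type bound. -/
lemma eNorm_mulVec_le (A : Matrix α β ℝ) (v : β → ℝ) :
    eNorm (A.mulVec v) ≤ Real.sqrt (∑ i, ∑ j, A i j ^ 2) * eNorm v := by
  have h : ∑ i, (A.mulVec v) i ^ 2 ≤ (∑ i, ∑ j, A i j ^ 2) * ∑ j, v j ^ 2 := by
    rw [Finset.sum_mul]
    refine Finset.sum_le_sum fun i _ => ?_
    exact Finset.sum_mul_sq_le_sq_mul_sq Finset.univ (A i) v
  calc eNorm (A.mulVec v) ≤ Real.sqrt ((∑ i, ∑ j, A i j ^ 2) * ∑ j, v j ^ 2) :=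
        Real.sqrt_le_sqrt h
    _ = _ := by
        rw [Real.sqrt_mul (by positivity)]
        rfl

lemma specNorm_bddAbove (A : Matrix α β ℝ) :
    BddAbove (Set.range fun ξ : {v : β → ℝ // eNorm v = 1} => eNorm (A.mulVec ξ.1)) := by
  refine ⟨Real.sqrt (∑ i, ∑ j, A i j ^ 2), ?_⟩
  rintro x ⟨ξ, rfl⟩
  simpa [ξ.2] using eNorm_mulVec_le A ξ.1

lemma le_specNorm (A : Matrix α β ℝ) (ξ : β → ℝ) (hξ : eNorm ξ = 1) :
    eNorm (A.mulVec ξ) ≤ specNorm A :=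
  le_ciSup (specNorm_bddAbove A) (⟨ξ, hξ⟩ : {v : β → ℝ // eNorm v = 1})

lemma specNorm_nonneg (A : Matrix α β ℝ) : 0 ≤ specNorm A :=
  Real.iSup_nonneg fun _ => eNorm_nonneg _

lemma eNorm_mulVec_le_specNorm (A : Matrix α β ℝ) (v : β → ℝ) :
    eNorm (A.mulVec v) ≤ specNorm A * eNorm v := by
  rcases eq_or_ne (eNorm v) 0 with h | h
  · rw [eNorm_eq_zero h]
    simp [Matrix.mulVec_zero, eNorm, specNorm_nonneg]
  · have hpos : 0 < eNorm v := lt_of_le_of_ne (eNorm_nonneg v) (Ne.symm h)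
    set ξ : β → ℝ := (eNorm v)⁻¹ • v with hξdef
    have hξ : eNorm ξ = 1 := by
      rw [hξdef, eNorm_smul, abs_of_pos (inv_pos.2 hpos), inv_mul_cancel₀ h]
    have := le_specNorm A ξ hξ
    rw [hξdef, Matrix.mulVec_smul, eNorm_smul, abs_of_pos (inv_pos.2 hpos)] at this
    calc eNorm (A.mulVec v) = eNorm v * ((eNorm v)⁻¹ * eNorm (A.mulVec v)) := by
          field_simp
      _ ≤ eNorm v * specNorm A := by
          exact mul_le_mul_of_nonneg_left this (le_of_lt hpos)
      _ = specNorm A * eNorm v := mul_comm _ _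

lemma quad_le_specNorm (A : Matrix β β ℝ) (v : β → ℝ) :
    v ⬝ᵥ A.mulVec v ≤ specNorm A * ∑ i, v i ^ 2 := by
  calc v ⬝ᵥ A.mulVec v ≤ eNorm v * eNorm (A.mulVec v) := dotProduct_le _ _
    _ ≤ eNorm v * (specNorm A * eNorm v) :=
        mul_le_mul_of_nonneg_left (eNorm_mulVec_le_specNorm A v) (eNorm_nonneg v)
    _ = specNorm A * eNorm v ^ 2 := by ring
    _ = _ := by rw [eNorm_sq]

end helpers

section psd
variable {β : Type*} [Fintype β] [DecidableEq β]

lemma psd_quad_nonneg {A : Matrix β β ℝ} (hA : A.PosSemidef) (x : β → ℝ) :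
    0 ≤ x ⬝ᵥ A.mulVec x := by simpa using hA.dotProduct_mulVec_nonneg x

lemma psd_diag_nonneg {A : Matrix β β ℝ} (hA : A.PosSemidef) (j : β) :
    0 ≤ A j j := by
  have := psd_quad_nonneg hA (Pi.single j 1)
  simpa [Matrix.mulVec, dotProduct, Pi.single_apply, Finset.sum_ite_eq] using this

lemma symm_apply {A : Matrix β β ℝ} (hA : A.IsHermitian) (i j : β) : A j i = A i j := by
  have := congrFun (congrFun hA.eq i) j
  simpa [Matrix.conjTranspose_apply] using this

lemma dot_symm {A : Matrix β β ℝ} (hA : A.IsHermitian) (x y : β → ℝ) :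
    x ⬝ᵥ A.mulVec y = y ⬝ᵥ A.mulVec x := by
  simp only [dotProduct, Matrix.mulVec, Finset.mul_sum]
  rw [Finset.sum_comm]
  exact Finset.sum_congr rfl fun i _ => Finset.sum_congr rfl fun j _ => by
    rw [symm_apply hA i j]; ring

lemma psd_cauchy_schwarz {A : Matrix β β ℝ} (hA : A.PosSemidef) (x y : β → ℝ) :
    (x ⬝ᵥ A.mulVec y) ^ 2 ≤ (x ⬝ᵥ A.mulVec x) * (y ⬝ᵥ A.mulVec y) := by
  have key : ∀ t : ℝ, 0 ≤ (x ⬝ᵥ A.mulVec x) * (t * t) + (2 * (x ⬝ᵥ A.mulVec y)) * t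
      + (y ⬝ᵥ A.mulVec y) := by
    intro t
    have h := psd_quad_nonneg hA (t • x + y)
    have hexp : (t • x + y) ⬝ᵥ A.mulVec (t • x + y)
        = (x ⬝ᵥ A.mulVec x) * (t * t) + (2 * (x ⬝ᵥ A.mulVec y)) * t + (y ⬝ᵥ A.mulVec y) := by
      rw [Matrix.mulVec_add, Matrix.mulVec_smul]
      simp only [add_dotProduct, dotProduct_add, smul_dotProduct,
        dotProduct_smul, smul_eq_mul]
      rw [dot_symm hA.1 y x]
      ring
    linarith [hexp ▸ h]
  have h := discrim_le_zero key
  rw [discrim] at h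
  nlinarith [h]

lemma psd_norm_bound {A : Matrix β β ℝ} (hA : A.PosSemidef) {c : ℝ} (hc : 0 ≤ c)
    (h : ∀ x : β → ℝ, x ⬝ᵥ A.mulVec x ≤ c * ∑ i, x i ^ 2) (x : β → ℝ) :
    eNorm (A.mulVec x) ≤ c * eNorm x := by
  set w := A.mulVec x with hw
  set s := ∑ i, w i ^ 2 with hs
  have hs0 : 0 ≤ s := Finset.sum_nonneg fun i _ => sq_nonneg _
  have hAT : Aᵀ = A := by
    have := hA.1.eq
    simpa [Matrix.conjTranspose_eq_transpose_of_trivial] using this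
  have hxw : x ⬝ᵥ A.mulVec w = s := by
    rw [Matrix.dotProduct_mulVec, ← Matrix.mulVec_transpose, hAT, ← hw]
    simp [dotProduct, hs, sq]
  have key : s ^ 2 ≤ c ^ 2 * (∑ i, x i ^ 2) * s := by
    have h1 := psd_cauchy_schwarz hA x w
    rw [hxw] at h1
    have h2 := h x
    have h3 := h w
    have hx0 : 0 ≤ x ⬝ᵥ A.mulVec x := psd_quad_nonneg hA x
    have hw0 : 0 ≤ w ⬝ᵥ A.mulVec w := psd_quad_nonneg hA w
    have hsx : 0 ≤ ∑ i, x i ^ 2 := Finset.sum_nonneg fun i _ => sq_nonneg _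
    nlinarith
  have s_le : s ≤ c ^ 2 * ∑ i, x i ^ 2 := by
    rcases hs0.eq_or_lt with h0 | h0
    · rw [← h0]
      positivity
    · have := le_of_mul_le_mul_right (by nlinarith : s * s ≤ (c ^ 2 * ∑ i, x i ^ 2) * s) h0
      exact this
  calc eNorm w = Real.sqrt s := rfl
    _ ≤ Real.sqrt (c ^ 2 * ∑ i, x i ^ 2) := Real.sqrt_le_sqrt s_le
    _ = c * eNorm x := by
        rw [Real.sqrt_mul (sq_nonneg c), Real.sqrt_sq hc]; rfl

end psd

/-- For `m × m` real symmetric positive semidefinite matrices `M, N`,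
the spectral norm of the Hadamard product satisfies
`‖M ∘ N‖ ≤ (max_j M_jj) ⬝ ‖N‖`. -/
theorem hadamard_specNorm_le {m : ℕ} (M N : Matrix (Fin m) (Fin m) ℝ)
    (hM : M.PosSemidef) (hN : N.PosSemidef) :
    specNorm (Matrix.hadamard M N) ≤ (⨆ j : Fin m, M j j) * specNorm N := by
  set d : ℝ := ⨆ j : Fin m, M j j with hd
  have hd0 : 0 ≤ d := Real.iSup_nonneg fun j => psd_diag_nonneg hM j
  have hdiag_le : ∀ i : Fin m, M i i ≤ d := fun i =>
    le_ciSup (f := fun j : Fin m => M j j) (Set.Finite.bddAbove (Set.finite_range _)) i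
  have hc0 : 0 ≤ d * specNorm N := mul_nonneg hd0 (specNorm_nonneg N)
  -- decomposition M = Bᵀ B
  open scoped MatrixOrder in
  obtain ⟨B, hB⟩ := CStarAlgebra.nonneg_iff_eq_star_mul_self.mp hM.nonneg
  have hentry : ∀ i j, M i j = ∑ k, B k i * B k j := by
    intro i j
    rw [hB]
    simp [Matrix.mul_apply, Matrix.conjTranspose_apply, Matrix.star_eq_conjTranspose]
  -- the auxiliary vectors
  set y : Fin m → (Fin m → ℝ) → (Fin m) → ℝ := fun k x i => B k i * x i with hy
  -- quadratic form identity
  have hquad : ∀ x : Fin m → ℝ,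
      x ⬝ᵥ (Matrix.hadamard M N).mulVec x = ∑ k, (y k x) ⬝ᵥ N.mulVec (y k x) := by
    intro x
    calc x ⬝ᵥ (Matrix.hadamard M N).mulVec x
        = ∑ i, ∑ j, x i * (M i j * N i j * x j) := by
          simp [dotProduct, Matrix.mulVec, Matrix.hadamard_apply, Finset.mul_sum]
      _ = ∑ i, ∑ j, ∑ k, (B k i * x i) * N i j * (B k j * x j) := by
          refine Finset.sum_congr rfl fun i _ => Finset.sum_congr rfl fun j _ => ?_
          calc x i * (M i j * N i j * x j)
              = (∑ k, B k i * B k j) * (x i * N i j * x j) := by rw [hentry i j]; ring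
            _ = ∑ k, B k i * B k j * (x i * N i j * x j) := by rw [Finset.sum_mul]
            _ = ∑ k, (B k i * x i) * N i j * (B k j * x j) :=
                Finset.sum_congr rfl fun k _ => by ring
      _ = ∑ k, ∑ i, ∑ j, (B k i * x i) * N i j * (B k j * x j) := by
          rw [show (∑ i, ∑ j, ∑ k, (B k i * x i) * N i j * (B k j * x j))
              = ∑ i, ∑ k, ∑ j, (B k i * x i) * N i j * (B k j * x j) from
            Finset.sum_congr rfl fun i _ => Finset.sum_comm]
          exact Finset.sum_comm
      _ = ∑ k, (y k x) ⬝ᵥ N.mulVec (y k x) := by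
          refine Finset.sum_congr rfl fun k _ => ?_
          simp only [dotProduct, Matrix.mulVec, Finset.mul_sum, hy]
          exact Finset.sum_congr rfl fun i _ => Finset.sum_congr rfl fun j _ => by ring
  -- Hadamard product is PSD
  have hMN : (Matrix.hadamard M N).PosSemidef := by
    refine Matrix.PosSemidef.of_dotProduct_mulVec_nonneg ?_ ?_
    · ext i j
      simp only [Matrix.conjTranspose_apply, Matrix.hadamard_apply, star_trivial]
      rw [symm_apply hM.1 i j, symm_apply hN.1 i j]
    · intro x
      have hx : star x = x := by simp
      rw [hx, hquad x]
      exact Finset.sum_nonneg fun k _ => psd_quad_nonneg hN (y k x)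
  -- quadratic form bound
  have hqbound : ∀ x : Fin m → ℝ,
      x ⬝ᵥ (Matrix.hadamard M N).mulVec x ≤ (d * specNorm N) * ∑ i, x i ^ 2 := by
    intro x
    rw [hquad x]
    calc ∑ k, (y k x) ⬝ᵥ N.mulVec (y k x)
        ≤ ∑ k, specNorm N * ∑ i, (y k x) i ^ 2 :=
          Finset.sum_le_sum fun k _ => quad_le_specNorm N (y k x)
      _ = specNorm N * ∑ i, M i i * x i ^ 2 := by
          rw [← Finset.mul_sum, Finset.sum_comm]
          congr 1
          refine Finset.sum_congr rfl fun i _ => ?_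
          rw [hentry i i, Finset.sum_mul]
          exact Finset.sum_congr rfl fun k _ => by simp only [hy]; ring
      _ ≤ specNorm N * ∑ i, d * x i ^ 2 := by
          refine mul_le_mul_of_nonneg_left (Finset.sum_le_sum fun i _ => ?_) (specNorm_nonneg N)
          exact mul_le_mul_of_nonneg_right (hdiag_le i) (sq_nonneg _)
      _ = (d * specNorm N) * ∑ i, x i ^ 2 := by rw [← Finset.mul_sum]; ring
  -- conclude
  refine Real.iSup_le (fun ξ => ?_) hc0
  have := psd_norm_bound hMN hc0 hqbound ξ.1
  rwa [ξ.2, mul_one] at this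
end

section
/- Fix X ∈ ℝ^{n×m}, y ∈ ℝ^m and rates η_w, η_z ≥ 0, and let ℓ(W,z) = (1/2)‖σ(WX)^⊤z − y‖². Suppose (W(t), z(t)) is a differentiable curve on an interval I such that every point (W(t), z(t)) is regular and the gradient flow equations Ẇ(t) = −η_w ∇_W ℓ(W(t),z(t)) and ż(t) = −η_z ∇_z ℓ(W(t),z(t)) hold on I. Then for every neuron ν ∈ [S], the quantity η_w·z_ν(t)² − η_z·‖W_ν(t)‖² is constant on I, where W_ν(t) ∈ ℝ^n denotes the ν-th row of W(t). -/
open scoped BigOperators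

/-- The ReLU activation function. -/
noncomputable def relu (t : ℝ) : ℝ := max t 0

/-- The `W`-gradient of the loss `ℓ(W,z) = (1/2)‖σ(WX)ᵀz − y‖²` at regular points:
`(∇_W ℓ)_{νi} = z_ν ∑_j 1((WX)_{νj} > 0) e_j X_{ij}` where `e = σ(WX)ᵀz − y`. -/
noncomputable def gradW {n m S : ℕ} (X : Fin n → Fin m → ℝ) (y : Fin m → ℝ)
    (W : Fin S → Fin n → ℝ) (z : Fin S → ℝ) : Fin S → Fin n → ℝ :=
  fun ν i => z ν * ∑ j, (if 0 < ∑ i', W ν i' * X i' j then (1 : ℝ) else 0) *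
      ((∑ μ, relu (∑ i', W μ i' * X i' j) * z μ) - y j) * X i j

/-- The `z`-gradient of the loss at regular points:
`(∇_z ℓ)_ν = ∑_j σ((WX)_{νj}) e_j` where `e = σ(WX)ᵀz − y`. -/
noncomputable def gradz {n m S : ℕ} (X : Fin n → Fin m → ℝ) (y : Fin m → ℝ)
    (W : Fin S → Fin n → ℝ) (z : Fin S → ℝ) : Fin S → ℝ :=
  fun ν => ∑ j, relu (∑ i, W ν i * X i j) *
      ((∑ μ, relu (∑ i', W μ i' * X i' j) * z μ) - y j)

/-- Key algebraic identity: `z_ν (∇_z ℓ)_ν = ∑_i W_{νi} (∇_W ℓ)_{νi}`. -/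
lemma key_identity {n m S : ℕ} (X : Fin n → Fin m → ℝ) (y : Fin m → ℝ)
    (W : Fin S → Fin n → ℝ) (z : Fin S → ℝ) (ν : Fin S) :
    z ν * gradz X y W z ν = ∑ i, W ν i * gradW X y W z ν i := by
  simp only [gradz, gradW]
  calc z ν * ∑ j, relu (∑ i, W ν i * X i j) *
        ((∑ μ, relu (∑ i', W μ i' * X i' j) * z μ) - y j)
      = ∑ j, z ν * ((if 0 < ∑ i', W ν i' * X i' j then (1:ℝ) else 0) *
        ((∑ μ, relu (∑ i', W μ i' * X i' j) * z μ) - y j) * (∑ i, W ν i * X i j)) := by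
        rw [Finset.mul_sum]
        refine Finset.sum_congr rfl fun j _ => ?_
        have : relu (∑ i, W ν i * X i j)
            = (if 0 < ∑ i', W ν i' * X i' j then (1:ℝ) else 0) * (∑ i, W ν i * X i j) := by
          unfold relu
          rcases lt_or_ge 0 (∑ i', W ν i' * X i' j) with h | h
          · simp [h, max_eq_left h.le]
          · simp [not_lt.2 h, max_eq_right h]
        rw [this]; ring
    _ = ∑ i, W ν i * (z ν * ∑ j, (if 0 < ∑ i', W ν i' * X i' j then (1:ℝ) else 0) *
        ((∑ μ, relu (∑ i', W μ i' * X i' j) * z μ) - y j) * X i j) := by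
        simp only [Finset.mul_sum]
        rw [Finset.sum_comm]
        refine Finset.sum_congr rfl fun j _ => ?_
        refine Finset.sum_congr rfl fun i _ => ?_
        ring

/-- Along any differentiable curve `(W(t), z(t))` on an interval `I`
consisting of regular points and satisfying the two-rate gradient flow equations
`Ẇ = −η_w ∇_W ℓ`, `ż = −η_z ∇_z ℓ`, the quantity `η_w z_ν(t)² − η_z ‖W_ν(t)‖²` is
constant on `I`, for every neuron `ν`. -/
theorem gradient_flow_invariant {n m S : ℕ} (X : Fin n → Fin m → ℝ) (y : Fin m → ℝ)
    (ηw ηz : ℝ) (hηw : 0 ≤ ηw) (hηz : 0 ≤ ηz)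
    (I : Set ℝ) (hI : Convex ℝ I)
    (W : ℝ → Fin S → Fin n → ℝ) (z : ℝ → Fin S → ℝ)
    (hreg : ∀ t ∈ I, ∀ ν j, (∑ i, W t ν i * X i j) ≠ 0)
    (hflowW : ∀ t ∈ I, HasDerivWithinAt W (-(ηw • gradW X y (W t) (z t))) I t)
    (hflowz : ∀ t ∈ I, HasDerivWithinAt z (-(ηz • gradz X y (W t) (z t))) I t) :
    ∀ ν : Fin S, ∀ t ∈ I, ∀ t' ∈ I,
      ηw * z t ν ^ 2 - ηz * ∑ i, W t ν i ^ 2 =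
        ηw * z t' ν ^ 2 - ηz * ∑ i, W t' ν i ^ 2 := by
  intro ν t ht t' ht'
  set f : ℝ → ℝ := fun s => ηw * z s ν ^ 2 - ηz * ∑ i, W s ν i ^ 2 with hf
  have hderiv : ∀ s ∈ I, HasDerivWithinAt f 0 I s := by
    intro s hs
    have hz : HasDerivWithinAt (fun u => z u ν)
        ((-(ηz • gradz X y (W s) (z s))) ν) I s :=
      hasDerivWithinAt_pi.1 (hflowz s hs) ν
    have hW : ∀ i, HasDerivWithinAt (fun u => W u ν i)
        ((-(ηw • gradW X y (W s) (z s))) ν i) I s := fun i =>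
      hasDerivWithinAt_pi.1 (hasDerivWithinAt_pi.1 (hflowW s hs) ν) i
    have h1 : HasDerivWithinAt (fun u => ηw * z u ν ^ 2)
        (ηw * (2 * z s ν * (-(ηz • gradz X y (W s) (z s))) ν)) I s := by
      have := (hz.pow 2).const_mul ηw
      simpa [mul_comm, mul_assoc, mul_left_comm] using this
    have h2 : HasDerivWithinAt (fun u => ηz * ∑ i, W u ν i ^ 2)
        (ηz * ∑ i, 2 * W s ν i * (-(ηw • gradW X y (W s) (z s))) ν i) I s := by
      have hsum : HasDerivWithinAt (fun u => ∑ i, W u ν i ^ 2)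
          (∑ i, 2 * W s ν i * (-(ηw • gradW X y (W s) (z s))) ν i) I s := by
        refine HasDerivWithinAt.fun_sum fun i _ => ?_
        have := (hW i).fun_pow 2
        simpa [mul_comm, mul_assoc, mul_left_comm] using this
      exact hsum.const_mul ηz
    have key := key_identity X y (W s) (z s) ν
    have : HasDerivWithinAt f
        (ηw * (2 * z s ν * (-(ηz • gradz X y (W s) (z s))) ν)
          - ηz * ∑ i, 2 * W s ν i * (-(ηw • gradW X y (W s) (z s))) ν i) I s := h1.sub h2
    convert this using 1
    simp only [Pi.neg_apply, Pi.smul_apply, smul_eq_mul]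
    rw [Finset.mul_sum]
    rw [show (∑ i, ηz * (2 * W s ν i * -(ηw * gradW X y (W s) (z s) ν i)))
        = -(2 * ηz * ηw * ∑ i, W s ν i * gradW X y (W s) (z s) ν i) by
      rw [Finset.mul_sum, ← Finset.sum_neg_distrib]
      exact Finset.sum_congr rfl fun i _ => by ring]
    rw [← key]
    ring
  have := hI.norm_image_sub_le_of_norm_hasDerivWithin_le
    (f' := fun _ => (0 : ℝ)) (C := 0) hderiv (fun x _ => by simp) ht ht'
  have h0 : f t' - f t = 0 := by
    have := this; rw [zero_mul] at this
    exact norm_le_zero_iff.1 this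
  have : f t' = f t := by linarith
  simpa [hf] using this.symm
end
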